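/- Let E be a locally convex space, τ its topology, and σ(E,E') its weak topology. If a sequence {x_n} in E is weakly null (converges to 0 in σ(E,E')) and the set {x_n : n ∈ ω} is τ-precompact, then x_n → 0 in τ. -/

import Mathlib

open Filter Topology Set
open scoped ENNReal Pointwise

noncomputable section

variable {E : Type*} [AddCommGroup E] [Module ℝ E] [TopologicalSpace E]

/-- Membership of a real sequence in `ℓ_p`, where the case `p = ∞` is interpreted as
membership in `c₀` (i.e. the sequence tends to `0`). -/
def SummableIn (p : ℝ≥0∞) (a : ℕ → ℝ) : Prop :=
  (p = ∞ → Tendsto a atTop (𝓝 (0 : ℝ))) ∧ (p ≠ ∞ → Memℓp a p)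

/-- A sequence of continuous functionals is weak* `p`-summable if it is pointwise `ℓ_p`. -/
def WeakStarPSummable (p : ℝ≥0∞) (χ : ℕ → E →L[ℝ] ℝ) : Prop :=
  ∀ x : E, SummableIn p fun n => χ n x

/-- `‖χ‖_A = sup { |χ x| : x ∈ A ∪ {0} }`. -/
def dualNormOn (A : Set E) (χ : E →L[ℝ] ℝ) : ℝ :=
  sSup ((fun x => |χ x|) '' (A ∪ {0}))

/-- `A` is a `(p,q)`-limited set. -/
def PQLimited (p q : ℝ≥0∞) (A : Set E) : Prop :=
  ∀ χ : ℕ → E →L[ℝ] ℝ, WeakStarPSummable p χ →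
    SummableIn q fun n => dualNormOn A (χ n)

/-- A sequence in `E` is weakly `p`-summable. -/
def WeaklyPSummable (p : ℝ≥0∞) (x : ℕ → E) : Prop :=
  ∀ χ : E →L[ℝ] ℝ, SummableIn p fun n => χ (x n)

/-- A sequence is weakly null. -/
def WeaklyNull (x : ℕ → E) : Prop :=
  ∀ χ : E →L[ℝ] ℝ, Tendsto (fun n => χ (x n)) atTop (𝓝 (0 : ℝ))

/-- A sequence is weakly `p`-Cauchy. -/
def WeaklyPCauchy (p : ℝ≥0∞) (x : ℕ → E) : Prop :=
  ∀ k j : ℕ → ℕ, StrictMono k → StrictMono j →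
    WeaklyPSummable p fun n => x (k n) - x (j n)

/-- A Cauchy sequence in a topological vector space. -/
def LCSCauchySeq (x : ℕ → E) : Prop :=
  ∀ U ∈ 𝓝 (0 : E), ∃ N : ℕ, ∀ m ≥ N, ∀ n ≥ N, x m - x n ∈ U

/-- A set is sequentially precompact if every sequence in it has a Cauchy subsequence. -/
def SeqPrecompactSet (A : Set E) : Prop :=
  ∀ u : ℕ → E, (∀ n, u n ∈ A) → ∃ φ : ℕ → ℕ, StrictMono φ ∧ LCSCauchySeq (u ∘ φ)

/-- A set is precompact (totally bounded). -/
def PrecompactSet (A : Set E) : Prop :=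
  ∀ U ∈ 𝓝 (0 : E), ∃ F : Set E, F.Finite ∧ A ⊆ F + U

/-- If a sequence in a locally convex space is weakly null and its range is precompact in the
original topology `τ`, then it is `τ`-null. -/
theorem stmt1 {E : Type*} [AddCommGroup E] [Module ℝ E] [TopologicalSpace E]
    [IsTopologicalAddGroup E] [ContinuousSMul ℝ E] [LocallyConvexSpace ℝ E]
    (x : ℕ → E) (hw : WeaklyNull x) (hp : PrecompactSet (Set.range x)) :
    Tendsto x atTop (𝓝 (0 : E)) := by
  by_contra h
  obtain ⟨U, hU, hfreq⟩ := Filter.not_tendsto_iff_exists_frequently_notMem.mp h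
  obtain ⟨U1, hU1, hU1U⟩ := exists_nhds_zero_half hU
  obtain ⟨U2, hU2, hU2U1⟩ := exists_nhds_zero_half hU1
  -- a convex symmetric neighborhood D ⊆ U2
  obtain ⟨C, ⟨hCnhds, hCconv⟩, hCsub⟩ :=
    (LocallyConvexSpace.convex_basis_zero ℝ E).mem_iff.mp hU2
  set D : Set E := C ∩ (-C) with hD
  have hDnhds : D ∈ 𝓝 (0 : E) := by
    apply Filter.inter_mem hCnhds
    simpa using (continuous_neg.continuousAt (x := (0 : E))).preimage_mem_nhds
      (by simpa using hCnhds)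
  have hDconv : Convex ℝ D := hCconv.inter (hCconv.neg)
  have hDsymm : ∀ z ∈ D, -z ∈ D := by
    rintro z ⟨hz1, hz2⟩
    exact ⟨by simpa using hz2, by simpa using hz1⟩
  have hDsub : D ⊆ U2 := fun z hz => hCsub hz.1
  set V : Set E := closure D with hV
  have hVconv : Convex ℝ V := hDconv.closure
  have hVclosed : IsClosed V := isClosed_closure
  have hVsub : V ⊆ U1 := by
    intro z hz
    have hcont : Continuous fun w : E => z - w := continuous_const.sub continuous_id
    have ht : (fun w : E => z - w) ⁻¹' U2 ∈ 𝓝 z := by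
      apply hcont.continuousAt.preimage_mem_nhds
      simpa using hU2
    obtain ⟨d, hd, hdD⟩ := mem_closure_iff_nhds.mp hz _ ht
    have : z = d + (z - d) := by abel
    rw [this]
    exact hU2U1 d (hDsub hdD) _ hd
  -- subsequence avoiding U
  obtain ⟨φ, hφmono, hφ⟩ := Filter.extraction_of_frequently_atTop hfreq
  -- pigeonhole with a finite set F from precompactness with D
  obtain ⟨F, hFfin, hFsub⟩ := hp D hDnhds
  have hmem : ∀ n : ℕ, ∃ f ∈ F, x (φ n) - f ∈ D := by
    intro n
    have : x (φ n) ∈ F + D := hFsub ⟨φ n, rfl⟩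
    obtain ⟨f, hf, d, hd, hfd⟩ := this
    exact ⟨f, hf, by rw [← hfd]; simpa using hd⟩
  choose g hgF hgD using hmem
  have : ∃ f : F, Set.Infinite {n : ℕ | (⟨g n, hgF n⟩ : F) = f} := by
    have : Finite F := hFfin
    obtain ⟨f, hf⟩ := Finite.exists_infinite_fiber (fun n : ℕ => (⟨g n, hgF n⟩ : F))
    exact ⟨f, Set.infinite_coe_iff.mp hf⟩
  obtain ⟨⟨f, hfF⟩, hfinf⟩ := this
  obtain ⟨ψ, hψmono, hψ⟩ := Filter.extraction_of_frequently_atTop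
    (Nat.frequently_atTop_iff_infinite.mpr hfinf)
  set y : ℕ → E := fun n => x (φ (ψ n)) with hy
  have hyD : ∀ n, y n - f ∈ D := by
    intro n
    have := hgD (ψ n)
    have heq : g (ψ n) = f := congrArg Subtype.val (hψ n)
    rwa [heq] at this
  have hynotU : ∀ n, y n ∉ U := fun n => hφ (ψ n)
  -- f is in V by Hahn-Banach
  have hfV : f ∈ V := by
    by_contra hfV
    obtain ⟨χ, u, hu, huf⟩ := geometric_hahn_banach_closed_point hVconv hVclosed hfV
    have hle : ∀ n, χ f - χ (y n) < u := by
      intro n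
      have : f - y n ∈ V := subset_closure (by simpa using hDsymm _ (hyD n))
      simpa using hu _ this
    have htend : Tendsto (fun n => χ f - χ (y n)) atTop (𝓝 (χ f)) := by
      have := (hw χ).comp (hφmono.comp hψmono).tendsto_atTop
      simpa using (tendsto_const_nhds (x := χ f)).sub this
    exact absurd (le_of_tendsto htend (Filter.Eventually.of_forall fun n => (hle n).le)) huf.not_ge
  -- conclude y 0 ∈ U, contradiction
  have : y 0 ∈ U := by
    have h1 : y 0 - f ∈ U1 := hVsub (subset_closure (hyD 0))
    have h2 : f ∈ U1 := hVsub hfV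
    have := hU1U _ h1 _ h2
    simpa using this
  exact hynotU 0 this
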